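/- arXiv:1904.10386 — 4 statements merged into one kernel-verified Lean document; each statement's English description precedes it below -/
import Mathlib

section
/- The strong mitigation relation well-orders every finite set of severity intervals: for every nonempty finite set A of pairs of real numbers, there exists a pair x ∈ A such that x ⊑ y for all y ∈ A, where ⊑ is the relation on ℝ × ℝ defined by (a,b) ⊑ (c,d) iff (c ≤ a ∧ d ≤ b) ∨ (a < c ∧ d < b). -/
/-- The strong mitigation relation on severity intervals `[a, b)`, represented
as pairs of reals: `(a,b) ⊑ (c,d)` iff `(c ≤ a ∧ d ≤ b) ∨ (a < c ∧ d < b)`. -/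
def SMOrd (x y : ℝ × ℝ) : Prop :=
  (y.1 ≤ x.1 ∧ y.2 ≤ x.2) ∨ (x.1 < y.1 ∧ y.2 < x.2)

/-- Every nonempty finite set of severity intervals has a least element w.r.t.
the strong mitigation relation. -/
theorem smord_wellorder (A : Set (ℝ × ℝ)) (hfin : A.Finite) (hne : A.Nonempty) :
    ∃ x ∈ A, ∀ y ∈ A, SMOrd x y := by
  obtain ⟨x, hxA, hx⟩ : ∃ x ∈ A, ∀ y ∈ A, toLex (x.2, x.1) ≤ (toLex (y.2, y.1) : ℝ ×ₗ ℝ) →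
      toLex (x.2, x.1) = (toLex (y.2, y.1) : ℝ ×ₗ ℝ) := by
    obtain ⟨x, hxA, hx⟩ := hfin.exists_maximalFor
      (fun p : ℝ × ℝ => toLex (p.2, p.1) : ℝ × ℝ → ℝ ×ₗ ℝ) A hne
    exact ⟨x, hxA, fun y hy h => le_antisymm h (hx (j := y) hy h)⟩
  refine ⟨x, hxA, fun y hy => ?_⟩
  have h : toLex (y.2, y.1) ≤ toLex (x.2, x.1) := by
    rcases le_total (toLex (y.2, y.1) : ℝ ×ₗ ℝ) (toLex (x.2, x.1)) with h | h
    · exact h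
    · exact le_of_eq (congrArg toLex (by
        have := hx y hy h
        exact (Prod.ext_iff.mpr ⟨congrArg (fun z => (ofLex z).1) this.symm,
          congrArg (fun z => (ofLex z).2) this.symm⟩)))
  rcases Prod.Lex.le_iff.mp h with h1 | ⟨h1, h2⟩
  · rcases le_or_gt y.1 x.1 with h2 | h2
    · exact Or.inl ⟨h2, le_of_lt h1⟩
    · exact Or.inr ⟨h2, h1⟩
  · exact Or.inl ⟨h2, le_of_eq h1⟩
end

section
/- The strong mitigation order extends the partially comparable inclusive mitigation order: suppose for each risk factor i the active phase act i is the least element of ⪯ᵢ, each factor i carries a severity interval (l i, u i) with l i ≤ u i, the index type ι is finite, and σ, σ' are risk states such that σ ≾ₘ σ' and the active set A' = {i | σ' i = act i} is nonempty (hence A = {i | σ i = act i} is nonempty). Let S(σ) = (min over A of l, max over A of u) and S(σ') = (min over A' of l, max over A' of u) be the convex-hull severity intervals. Then σ ≤ₘ σ' holds, i.e., either S(σ') is below S(σ) componentwise (min over A' of l ≤ min over A of l and max over A' of u ≤ max over A of u) or S(σ') is properly included in S(σ) (min over A of l ≤ min over A' of l, max over A' of u ≤ max over A of u, and S(σ')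 ≠ S(σ)). -/
/-- Partially comparable inclusive mitigation order. -/
def PartMit {ι : Type*} {Phase : ι → Type*} [∀ i, PartialOrder (Phase i)]
    (σ σ' : ∀ i, Phase i) : Prop :=
  ∀ i, σ i ≤ σ' i ∨ (¬ σ i ≤ σ' i ∧ ¬ σ' i ≤ σ i)

/-- Lower bound of the convex-hull severity interval of a set of factors. -/
noncomputable def SLo {ι : Type*} (l : ι → ℝ) (A : Set ι) : ℝ := sInf (l '' A)

/-- Upper bound of the convex-hull severity interval of a set of factors. -/
noncomputable def SHi {ι : Type*} (u : ι → ℝ) (A : Set ι) : ℝ := sSup (u '' A)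

/-- The strong mitigation order extends the partially comparable inclusive
mitigation order: if σ ≾ₘ σ' and σ' has a nonempty active set, then the
accumulated severity interval of σ' is componentwise below that of σ or is
properly included in it. -/
theorem strong_extends_partial {ι : Type*} {Phase : ι → Type*}
    [∀ i, PartialOrder (Phase i)] [Finite ι]
    (act : ∀ i, Phase i) (hact : ∀ i (p : Phase i), act i ≤ p)
    (l u : ι → ℝ) (hlu : ∀ i, l i ≤ u i)
    (σ σ' : ∀ i, Phase i)
    (h : PartMit σ σ')
    (hA' : {i | σ' i = act i}.Nonempty) :
    (SLo l {i | σ' i = act i} ≤ SLo l {i | σ i = act i} ∧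
      SHi u {i | σ' i = act i} ≤ SHi u {i | σ i = act i}) ∨
    (SLo l {i | σ i = act i} ≤ SLo l {i | σ' i = act i} ∧
      SHi u {i | σ' i = act i} ≤ SHi u {i | σ i = act i} ∧
      (SLo l {i | σ' i = act i}, SHi u {i | σ' i = act i}) ≠
        (SLo l {i | σ i = act i}, SHi u {i | σ i = act i})) := by
  have hsub : {i | σ' i = act i} ⊆ {i | σ i = act i} := by
    intro i hi
    have h1 : σ' i ≤ σ i := hi ▸ hact i (σ i)
    rcases h i with h2 | ⟨_, h3⟩
    · exact le_antisymm (h2.trans_eq hi) (hact i (σ i))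
    · exact absurd h1 h3
  have hA : {i | σ i = act i}.Nonempty := hA'.mono hsub
  have hfin : ∀ A : Set ι, A.Finite := fun A => Set.toFinite A
  have hlo : SLo l {i | σ i = act i} ≤ SLo l {i | σ' i = act i} := by
    apply csInf_le_csInf ((hfin _).image l).bddBelow (hA'.image l)
    exact Set.image_mono (f := l) hsub
  have hhi : SHi u {i | σ' i = act i} ≤ SHi u {i | σ i = act i} := by
    apply csSup_le_csSup ((hfin _).image u).bddAbove (hA'.image u)
    exact Set.image_mono (f := u) hsub
  by_cases heq : (SLo l {i | σ' i = act i}, SHi u {i | σ' i = act i}) =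
      (SLo l {i | σ i = act i}, SHi u {i | σ i = act i})
  · left
    exact ⟨(Prod.mk.injEq _ _ _ _ ▸ heq).1.le, hhi⟩
  · right
    exact ⟨hlo, hhi, heq⟩
end

section
/- The strong mitigation order extends the partially comparable inclusive mitigation order, which in turn extends the fully comparable inclusive mitigation order: under the assumptions that for each factor i the active phase act i is the least element of ⪯ᵢ, each factor carries a severity interval (l i, u i) with l i ≤ u i, ι is finite, and the active set of σ' is nonempty, the chain of implications σ ⪯ₘ σ' ⟹ σ ≾ₘ σ' ⟹ σ ≤ₘ σ' holds, where σ ≤ₘ σ' means that either S(σ') is below S(σ) componentwise or S(σ') is properly included in S(σ). -/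
/-- Fully comparable inclusive mitigation order. -/
def FullMit {ι : Type*} {Phase : ι → Type*} [∀ i, PartialOrder (Phase i)]
    (σ σ' : ∀ i, Phase i) : Prop :=
  ∀ i, σ i ≤ σ' i

/-- The strong mitigation order extends the partially comparable inclusive
mitigation order, which extends the fully comparable one:
σ ⪯ₘ σ' ⟹ σ ≾ₘ σ' ⟹ σ ≤ₘ σ'. -/
theorem mitigation_order_chain {ι : Type*} {Phase : ι → Type*}
    [∀ i, PartialOrder (Phase i)] [Finite ι]
    (act : ∀ i, Phase i) (hact : ∀ i (p : Phase i), act i ≤ p)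
    (l u : ι → ℝ) (hlu : ∀ i, l i ≤ u i)
    (σ σ' : ∀ i, Phase i)
    (hA' : {i | σ' i = act i}.Nonempty) :
    (FullMit σ σ' → PartMit σ σ') ∧
    (PartMit σ σ' →
      (SLo l {i | σ' i = act i} ≤ SLo l {i | σ i = act i} ∧
        SHi u {i | σ' i = act i} ≤ SHi u {i | σ i = act i}) ∨
      (SLo l {i | σ i = act i} ≤ SLo l {i | σ' i = act i} ∧
        SHi u {i | σ' i = act i} ≤ SHi u {i | σ i = act i} ∧
        (SLo l {i | σ' i = act i}, SHi u {i | σ' i = act i}) ≠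
          (SLo l {i | σ i = act i}, SHi u {i | σ i = act i}))) := by
  constructor
  · intro h i
    exact Or.inl (h i)
  · intro h
    have hsub : {i | σ' i = act i} ⊆ {i | σ i = act i} := by
      intro i hi
      have h1 : σ' i ≤ σ i := by
        rw [Set.mem_setOf_eq] at hi
        rw [hi]; exact hact i (σ i)
      rcases h i with h2 | ⟨_, h3⟩
      · have : σ i ≤ act i := hi ▸ h2
        exact le_antisymm this (hact i (σ i))
      · exact absurd h1 h3
    have hloA : SLo l {i | σ i = act i} ≤ SLo l {i | σ' i = act i} :=
      csInf_le_csInf (Set.toFinite _).bddBelow (hA'.image l) (Set.image_mono (f := l) hsub)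
    have hhi : SHi u {i | σ' i = act i} ≤ SHi u {i | σ i = act i} :=
      csSup_le_csSup (Set.toFinite _).bddAbove (hA'.image u) (Set.image_mono (f := u) hsub)
    by_cases heq : SLo l {i | σ' i = act i} = SLo l {i | σ i = act i}
    · exact Or.inl ⟨heq.le, hhi⟩
    · exact Or.inr ⟨hloA, hhi, fun hp => heq (congrArg Prod.fst hp)⟩
end

section
/- Parallel composition of risk structures is commutative: for any risk structures L1 over scope F1 and L2 over scope F2, the composition L1 ∥ L2 equals L2 ∥ L1, i.e., they have the same state space (R(F1) ⊗ R(F2) = R(F2) ⊗ R(F1)), the same set of initial states, and the same transition relation generated by the composition rules. -/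
/-- The risk space over `F`: all sets of dependent pairs `(i, p)` that are
functional with domain `F`. -/
def RSpace {ι : Type*} (Phase : ι → Type*) (F : Set ι) : Set (Set (Sigma Phase)) :=
  { σ | (∀ i ∈ F, ∃! p : Phase i, Sigma.mk i p ∈ σ) ∧ ∀ x ∈ σ, x.1 ∈ F }

/-- Consistency (compatibility) of risk states: the phases assigned to a common
identifier coincide. -/
def Compatible {ι : Type*} {Phase : ι → Type*} (σ1 σ2 : Set (Sigma Phase)) : Prop :=
  ∀ (i : ι) (p q : Phase i), Sigma.mk i p ∈ σ1 → Sigma.mk i q ∈ σ2 → p = q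

/-- Composition of sets of risk states. -/
def SComp {ι : Type*} {Phase : ι → Type*} (A B : Set (Set (Sigma Phase))) :
    Set (Set (Sigma Phase)) :=
  { σ | ∃ σ1 ∈ A, ∃ σ2 ∈ B, Compatible σ1 σ2 ∧ σ = σ1 ∪ σ2 }

/-- A risk structure over scope `F`: a labelled transition system on the risk
space `R(F)` whose labels are nonempty subsets of the alphabet `Ev`. -/
structure RiskStructure {ι : Type*} (Phase : ι → Type*) (Ev : Type*) (F : Set ι) where
  init : Set (Set (Sigma Phase))
  trans : Set (Set (Sigma Phase) × Set Ev × Set (Sigma Phase))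
  init_wf : init ⊆ RSpace Phase F
  src_wf : ∀ t ∈ trans, t.1 ∈ RSpace Phase F
  tgt_wf : ∀ t ∈ trans, t.2.2 ∈ RSpace Phase F
  lbl_ne : ∀ t ∈ trans, t.2.1 ≠ ∅

/-- The transition relation of the parallel composition of two risk structures,
generated by the five composition rules. -/
inductive ParStep {ι : Type*} {Phase : ι → Type*} {Ev : Type*}
    (T1 T2 : Set (Set (Sigma Phase) × Set Ev × Set (Sigma Phase))) :
    Set (Sigma Phase) → Set Ev → Set (Sigma Phase) → Prop
  | left {σ1 σ1' σ2 : Set (Sigma Phase)} {e : Set Ev} :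
      (σ1, e, σ1') ∈ T1 → (¬ ∃ f σ2', (σ2, f, σ2') ∈ T2) →
      Compatible σ1 σ2 → Compatible σ1' σ2 → e ≠ ∅ →
      ParStep T1 T2 (σ1 ∪ σ2) e (σ1' ∪ σ2)
  | right {σ1 σ2 σ2' : Set (Sigma Phase)} {f : Set Ev} :
      (¬ ∃ e σ1', (σ1, e, σ1') ∈ T1) → (σ2, f, σ2') ∈ T2 →
      Compatible σ1 σ2 → Compatible σ1 σ2' → f ≠ ∅ →
      ParStep T1 T2 (σ1 ∪ σ2) f (σ1 ∪ σ2')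
  | pleft {σ1 σ1' σ2 σ2' : Set (Sigma Phase)} {e f : Set Ev} :
      (σ1, e, σ1') ∈ T1 → (σ2, f, σ2') ∈ T2 →
      Compatible σ1 σ2 → Compatible σ1' σ2 → e \ f ≠ ∅ →
      ParStep T1 T2 (σ1 ∪ σ2) (e \ f) (σ1' ∪ σ2)
  | pright {σ1 σ1' σ2 σ2' : Set (Sigma Phase)} {e f : Set Ev} :
      (σ1, e, σ1') ∈ T1 → (σ2, f, σ2') ∈ T2 →
      Compatible σ1 σ2 → Compatible σ1 σ2' → f \ e ≠ ∅ →
      ParStep T1 T2 (σ1 ∪ σ2) (f \ e) (σ1 ∪ σ2')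
  | both {σ1 σ1' σ2 σ2' : Set (Sigma Phase)} {e f : Set Ev} :
      (σ1, e, σ1') ∈ T1 → (σ2, f, σ2') ∈ T2 →
      Compatible σ1 σ2 → Compatible σ1' σ2' → e ∩ f ≠ ∅ →
      ParStep T1 T2 (σ1 ∪ σ2) (e ∩ f) (σ1' ∪ σ2')


theorem Compatible.symm' {ι : Type*} {Phase : ι → Type*} {σ1 σ2 : Set (Sigma Phase)}
    (h : Compatible σ1 σ2) : Compatible σ2 σ1 :=
  fun i p q hp hq => (h i q p hq hp).symm

theorem sComp_comm {ι : Type*} {Phase : ι → Type*} (A B : Set (Set (Sigma Phase))) :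
    SComp A B = SComp B A := by
  ext σ
  constructor <;> rintro ⟨σ1, h1, σ2, h2, hc, rfl⟩ <;>
    exact ⟨σ2, h2, σ1, h1, hc.symm', Set.union_comm _ _⟩

theorem parStep_swap {ι : Type*} {Phase : ι → Type*} {Ev : Type*}
    {T1 T2 : Set (Set (Sigma Phase) × Set Ev × Set (Sigma Phase))}
    {s s' : Set (Sigma Phase)} {e : Set Ev}
    (h : ParStep T1 T2 s e s') : ParStep T2 T1 s e s' := by
  cases h with
  | @left σ1 σ1' σ2 e h1 h2 hc hc' hne =>
      rw [Set.union_comm σ1 σ2, Set.union_comm σ1' σ2]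
      exact ParStep.right h2 h1 hc.symm' hc'.symm' hne
  | @right σ1 σ2 σ2' f h1 h2 hc hc' hne =>
      rw [Set.union_comm σ1 σ2, Set.union_comm σ1 σ2']
      exact ParStep.left h2 h1 hc.symm' hc'.symm' hne
  | @pleft σ1 σ1' σ2 σ2' e f h1 h2 hc hc' hne =>
      rw [Set.union_comm σ1 σ2, Set.union_comm σ1' σ2]
      exact ParStep.pright h2 h1 hc.symm' hc'.symm' hne
  | @pright σ1 σ1' σ2 σ2' e f h1 h2 hc hc' hne =>
      rw [Set.union_comm σ1 σ2, Set.union_comm σ1 σ2']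
      exact ParStep.pleft h2 h1 hc.symm' hc'.symm' hne
  | @both σ1 σ1' σ2 σ2' e f h1 h2 hc hc' hne =>
      rw [Set.union_comm σ1 σ2, Set.union_comm σ1' σ2', Set.inter_comm e f]
      exact ParStep.both h2 h1 hc.symm' hc'.symm' (by rwa [Set.inter_comm])

/-- Parallel composition of risk structures is commutative: `L1 ∥ L2` and
`L2 ∥ L1` have the same state space, the same initial states, and the same
transition relation. -/
theorem parStep_comm {ι : Type*} {Phase : ι → Type*} {Ev : Type*}
    (F1 F2 : Set ι)
    (L1 : RiskStructure Phase Ev F1) (L2 : RiskStructure Phase Ev F2) :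
    SComp (RSpace Phase F1) (RSpace Phase F2) =
      SComp (RSpace Phase F2) (RSpace Phase F1) ∧
    SComp L1.init L2.init = SComp L2.init L1.init ∧
    ∀ (s : Set (Sigma Phase)) (e : Set Ev) (s' : Set (Sigma Phase)),
      ParStep L1.trans L2.trans s e s' ↔ ParStep L2.trans L1.trans s e s' := by
  exact ⟨sComp_comm _ _, sComp_comm _ _, fun s e s' => ⟨parStep_swap, parStep_swap⟩⟩
end
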